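/- Let X be a real inner product space and n ≥ 2. Then for all x, y, x₂, ..., xₙ ∈ X, the n-iterated 2-inner product satisfies the Cauchy–Schwarz inequality ((x,y|xₙ,...,x₂)_*)² ≤ (x,x|xₙ,...,x₂)_* · (y,y|xₙ,...,x₂)_*. -/
import Mathlib


open scoped InnerProductSpace

/-- The `n`-iterated 2-inner product `(x, y | xₙ, …, x₂)_*` on a real inner
product space, where the list `l = [xₙ, x_{n-1}, …, x₂]` collects the
conditioning vectors (so `n = l.length + 1`).  For the empty list it is the
inner product `⟪x, y⟫` (the convention for `n = 1`), and
`(x, y | xₙ, …, x₂)_* = (x,y|x_{n-1},…,x₂)_* (xₙ,xₙ|x_{n-1},…,x₂)_*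
  - (x,xₙ|x_{n-1},…,x₂)_* (xₙ,y|x_{n-1},…,x₂)_*`.
In particular `(x,y|z)_* = ⟪x,y⟫⟪z,z⟫ - ⟪x,z⟫⟪z,y⟫`. -/
noncomputable def iter2 {X : Type*} [NormedAddCommGroup X] [InnerProductSpace ℝ X] :
    X → X → List X → ℝ
  | x, y, [] => ⟪x, y⟫_ℝ
  | x, y, (z :: l) => iter2 x y l * iter2 z z l - iter2 x z l * iter2 z y l

section Aux

variable {X : Type*} [NormedAddCommGroup X] [InnerProductSpace ℝ X]

lemma iter2_symm (x y : X) (l : List X) : iter2 x y l = iter2 y x l := by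
  induction l generalizing x y with
  | nil => simp only [iter2]; exact real_inner_comm y x
  | cons z l ih =>
      simp only [iter2]
      rw [ih x y, ih x z, ih z y]
      ring

lemma iter2_add_left (x x' y : X) (l : List X) :
    iter2 (x + x') y l = iter2 x y l + iter2 x' y l := by
  induction l generalizing x x' y with
  | nil => exact inner_add_left x x' y
  | cons z l ih => simp only [iter2, ih]; ring

lemma iter2_smul_left (t : ℝ) (x y : X) (l : List X) :
    iter2 (t • x) y l = t * iter2 x y l := by
  induction l generalizing x y with
  | nil => exact real_inner_smul_left x y t
  | cons z l ih => simp only [iter2, ih]; ring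

lemma iter2_add_right (x y y' : X) (l : List X) :
    iter2 x (y + y') l = iter2 x y l + iter2 x y' l := by
  rw [iter2_symm, iter2_add_left, iter2_symm y x, iter2_symm y' x]

lemma iter2_smul_right (t : ℝ) (x y : X) (l : List X) :
    iter2 x (t • y) l = t * iter2 x y l := by
  rw [iter2_symm, iter2_smul_left, iter2_symm y x]

/-- Cauchy–Schwarz from the discriminant argument, given nonnegative diagonal. -/
lemma iter2_cs_of_nonneg (x y : X) (l : List X) (hnn : ∀ w : X, 0 ≤ iter2 w w l) :
    (iter2 x y l) ^ 2 ≤ iter2 x x l * iter2 y y l := by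
  have key : ∀ t : ℝ,
      0 ≤ iter2 x x l * (t * t) + (2 * iter2 x y l) * t + iter2 y y l := by
    intro t
    have h := hnn (t • x + y)
    have hexp : iter2 (t • x + y) (t • x + y) l
        = iter2 x x l * (t * t) + (2 * iter2 x y l) * t + iter2 y y l := by
      rw [iter2_add_left, iter2_add_right, iter2_add_right, iter2_smul_left,
        iter2_smul_left, iter2_smul_right, iter2_smul_right, iter2_symm y x]
      ring
    linarith [hexp ▸ h]
  have hd := discrim_le_zero (a := iter2 x x l) (b := 2 * iter2 x y l) (c := iter2 y y l) key
  rw [discrim] at hd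
  nlinarith [hd]

lemma iter2_cs (x y : X) (l : List X) :
    (iter2 x y l) ^ 2 ≤ iter2 x x l * iter2 y y l := by
  induction l generalizing x y with
  | nil =>
      have := real_inner_mul_inner_self_le x y
      simpa [iter2, sq] using this
  | cons z l ih =>
      apply iter2_cs_of_nonneg
      intro w
      have h := ih w z
      simp only [iter2]
      rw [iter2_symm z w]
      nlinarith [h]

end Aux

/-- Cauchy–Schwarz inequality for the `n`-iterated 2-inner product (`n ≥ 2`):
`((x, y | xₙ, …, x₂)_*)² ≤ (x, x | xₙ, …, x₂)_* · (y, y | xₙ, …, x₂)_*`. -/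
theorem iter2_cauchy_schwarz {X : Type*} [NormedAddCommGroup X] [InnerProductSpace ℝ X]
    (x y z : X) (l : List X) :
    (iter2 x y (z :: l)) ^ 2 ≤ iter2 x x (z :: l) * iter2 y y (z :: l) := by
  exact iter2_cs x y (z :: l)
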